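/- Let v:[0,1]→ℝ be bounded Lipschitz with stopped flow Φ_t, let ψ ∈ C¹([0,1]×[0,T]) satisfy ∂_x ψ(0,t) = ∂_x ψ(1,t) = 0 for all t ∈ [0,T]. Then for every y ∈ [0,1], the function t ↦ ψ(Φ_t(y), t) is differentiable on [0,T] with derivative ∂_x ψ(Φ_t(y),t)·v(Φ_t(y)) + ∂_t ψ(Φ_t(y),t) for t < τ_∂(y), and with derivative ∂_t ψ(Φ_t(y),t) for t ≥ τ_∂(y), where τ_∂(y) is the boundary hitting time; moreover ψ(Φ_T(y),T) − ψ(y,0) = ∫_0^T [∂_x ψ(Φ_t(y),t)·v(Φ_t(y)) + ∂_t ψ(Φ_t(y),t)] dt. -/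

import Mathlib

open MeasureTheory Set Filter
open scoped ENNReal NNReal Topology

noncomputable section

abbrev I01 : Type := Set.Icc (0:ℝ) 1

noncomputable def tvNorm (μ : SignedMeasure I01) : ℝ :=
  (μ.totalVariation Set.univ).toReal

noncomputable def supNorm (φ : I01 → ℝ) : ℝ := ⨆ x : I01, |φ x|

noncomputable def lipConst (φ : I01 → ℝ) : ℝ :=
  sInf {K : ℝ | 0 ≤ K ∧ ∀ x y : I01, |φ x - φ y| ≤ K * dist x y}

noncomputable def blNorm (φ : I01 → ℝ) : ℝ := supNorm φ + lipConst φ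

noncomputable def pairSM (μ : SignedMeasure I01) (φ : I01 → ℝ) : ℝ :=
  ∫ x, φ x ∂μ.toJordanDecomposition.posPart - ∫ x, φ x ∂μ.toJordanDecomposition.negPart

noncomputable def dualBLNorm (μ : SignedMeasure I01) : ℝ :=
  sSup {r : ℝ | ∃ φ : I01 → ℝ, Continuous φ ∧ blNorm φ ≤ 1 ∧ r = |pairSM μ φ|}

noncomputable def Ff (f : I01 → ℝ) (μ : SignedMeasure I01) : SignedMeasure I01 :=
  μ.toJordanDecomposition.posPart.withDensityᵥ f -
    μ.toJordanDecomposition.negPart.withDensityᵥ f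

/-- The stopped flow on `[0,1]` generated by a velocity field `v`: trajectories solve
`ẋ = v(x)` up to the boundary-hitting time `τ` and are frozen afterwards at the boundary
point reached; `τ` is maximal (the trajectory is stopped only where `v` pushes it
strictly out of `[0,1]`). -/
structure StoppedFlow where
  v : I01 → ℝ
  Φ : ℝ → I01 → I01
  τ : I01 → ℝ≥0∞
  init : ∀ y, Φ 0 y = y
  ode : ∀ y, ∀ t : ℝ, 0 ≤ t → ENNReal.ofReal t < τ y →
      HasDerivAt (fun s => (Φ s y : ℝ)) (v (Φ t y)) t
  stopped : ∀ y, ∀ t : ℝ, τ y ≤ ENNReal.ofReal t →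
      (Φ t y : ℝ) = 0 ∨ (Φ t y : ℝ) = 1
  frozen : ∀ y, ∀ s t : ℝ, τ y ≤ ENNReal.ofReal s → s ≤ t → Φ t y = Φ s y
  maximal : ∀ y, τ y ≠ ⊤ →
      (((Φ (τ y).toReal y : ℝ) = 0 ∧ v (Φ (τ y).toReal y) < 0) ∨
       ((Φ (τ y).toReal y : ℝ) = 1 ∧ 0 < v (Φ (τ y).toReal y)))
  cont_t : ∀ y, Continuous fun t => Φ t y
  cont_y : ∀ t : ℝ, 0 ≤ t → Continuous fun y => Φ t y

/-- Differentiation of `t ↦ ψ(Φ_t(y), t)` for a `C¹` test function `ψ` (with partial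
derivatives `ψx`, `ψt` on `[0,1]×[0,T]`) satisfying the no-flux boundary conditions
`∂_x ψ(0,t) = ∂_x ψ(1,t) = 0`, together with the fundamental theorem of calculus
identity along stopped trajectories. -/
theorem deriv_along_stopped_flow (F : StoppedFlow) (K : ℝ≥0) (hv : LipschitzWith K F.v)
    (T : ℝ) (hT : 0 < T) (ψ ψx ψt : ℝ → ℝ → ℝ)
    (hψ : ∀ x ∈ Set.Icc (0:ℝ) 1, ∀ t ∈ Set.Icc (0:ℝ) T,
      HasFDerivWithinAt (fun p : ℝ × ℝ => ψ p.1 p.2)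
        ((ψx x t) • (ContinuousLinearMap.fst ℝ ℝ ℝ) +
          (ψt x t) • (ContinuousLinearMap.snd ℝ ℝ ℝ))
        (Set.Icc (0:ℝ) 1 ×ˢ Set.Icc (0:ℝ) T) (x, t))
    (hψx : ContinuousOn (fun p : ℝ × ℝ => ψx p.1 p.2) (Set.Icc (0:ℝ) 1 ×ˢ Set.Icc (0:ℝ) T))
    (hψt : ContinuousOn (fun p : ℝ × ℝ => ψt p.1 p.2) (Set.Icc (0:ℝ) 1 ×ˢ Set.Icc (0:ℝ) T))
    (hbc : ∀ t ∈ Set.Icc (0:ℝ) T, ψx 0 t = 0 ∧ ψx 1 t = 0)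
    (y : I01) :
    (∀ t ∈ Set.Icc (0:ℝ) T, ENNReal.ofReal t < F.τ y →
      HasDerivWithinAt (fun s => ψ (F.Φ s y : ℝ) s)
        (ψx (F.Φ t y : ℝ) t * F.v (F.Φ t y) + ψt (F.Φ t y : ℝ) t) (Set.Icc 0 T) t) ∧
    (∀ t ∈ Set.Icc (0:ℝ) T, F.τ y ≤ ENNReal.ofReal t →
      HasDerivWithinAt (fun s => ψ (F.Φ s y : ℝ) s)
        (ψt (F.Φ t y : ℝ) t) (Set.Icc 0 T) t) ∧
    ψ (F.Φ T y : ℝ) T - ψ (y : ℝ) 0 =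
      ∫ t in (0:ℝ)..T, (ψx (F.Φ t y : ℝ) t * F.v (F.Φ t y) + ψt (F.Φ t y : ℝ) t) := by
  set g : ℝ → ℝ := fun s => ψ (F.Φ s y : ℝ) s with hg_def
  set d : ℝ → ℝ := fun t => ψx (F.Φ t y : ℝ) t * F.v (F.Φ t y) + ψt (F.Φ t y : ℝ) t with hd_def
  have hmem : ∀ s : ℝ, (F.Φ s y : ℝ) ∈ Set.Icc (0:ℝ) 1 := fun s => (F.Φ s y).2
  -- chain rule helper
  have hchain : ∀ t ∈ Set.Icc (0:ℝ) T, ∀ (c : ℝ → ℝ) (w : ℝ), (∀ s, c s ∈ Set.Icc (0:ℝ) 1) →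
      HasDerivWithinAt c w (Set.Icc 0 T) t →
      HasDerivWithinAt (fun s => ψ (c s) s) (ψx (c t) t * w + ψt (c t) t) (Set.Icc 0 T) t := by
    intro t ht c w hcm hc
    have hcurve : HasDerivWithinAt (fun s => (c s, s)) (w, 1) (Set.Icc 0 T) t :=
      hc.prodMk (hasDerivWithinAt_id t _)
    have hmaps : Set.MapsTo (fun s => (c s, s)) (Set.Icc (0:ℝ) T)
        (Set.Icc (0:ℝ) 1 ×ˢ Set.Icc (0:ℝ) T) := fun s hs => ⟨hcm s, hs⟩
    have h := (hψ (c t) (hcm t) t ht).comp_hasDerivWithinAt_of_eq t hcurve hmaps rfl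
    simpa [Function.comp_def, mul_comm] using h
  have hmapsΦ : Set.MapsTo (fun s => ((F.Φ s y : ℝ), s)) (Set.Icc (0:ℝ) T)
      (Set.Icc (0:ℝ) 1 ×ˢ Set.Icc (0:ℝ) T) := fun s hs => ⟨hmem s, hs⟩
  have hcurveC : Continuous fun s : ℝ => (F.Φ s y : ℝ) :=
    continuous_subtype_val.comp (F.cont_t y)
  have hpairC : ContinuousOn (fun s : ℝ => ((F.Φ s y : ℝ), s)) (Set.Icc 0 T) :=
    (hcurveC.prodMk continuous_id).continuousOn
  have hψcont : ContinuousOn (fun p : ℝ × ℝ => ψ p.1 p.2)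
      (Set.Icc (0:ℝ) 1 ×ˢ Set.Icc (0:ℝ) T) :=
    fun p hp => (hψ p.1 hp.1 p.2 hp.2).continuousWithinAt
  have hgcont : ContinuousOn g (Set.Icc 0 T) := hψcont.comp' hpairC hmapsΦ
  have hdcont : ContinuousOn d (Set.Icc 0 T) := by
    have h1 : ContinuousOn (fun t : ℝ => ψx (F.Φ t y : ℝ) t) (Set.Icc 0 T) :=
      hψx.comp' hpairC hmapsΦ
    have h2 : ContinuousOn (fun t : ℝ => ψt (F.Φ t y : ℝ) t) (Set.Icc 0 T) :=
      hψt.comp' hpairC hmapsΦ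
    have h3 : Continuous (fun t : ℝ => F.v (F.Φ t y)) := hv.continuous.comp (F.cont_t y)
    exact (h1.mul h3.continuousOn).add h2
  -- ODE regime
  have hode : ∀ t ∈ Set.Icc (0:ℝ) T, ENNReal.ofReal t < F.τ y →
      HasDerivWithinAt g (d t) (Set.Icc 0 T) t := by
    intro t ht hlt
    exact hchain t ht _ _ hmem (F.ode y t ht.1 hlt).hasDerivWithinAt
  -- at/after the stopping time, ψx vanishes along the trajectory
  have hψx0 : ∀ t ∈ Set.Icc (0:ℝ) T, F.τ y ≤ ENNReal.ofReal t →
      ψx (F.Φ t y : ℝ) t = 0 := by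
    intro t ht hle
    rcases F.stopped y t hle with h | h <;> rw [h]
    · exact (hbc t ht).1
    · exact (hbc t ht).2
  have hdc : ∀ t ∈ Set.Icc (0:ℝ) T, F.τ y ≤ ENNReal.ofReal t →
      d t = ψt (F.Φ t y : ℝ) t := by
    intro t ht hle
    simp [hd_def, hψx0 t ht hle]
  -- main differentiability claim
  have hmain : ∀ t ∈ Set.Icc (0:ℝ) T, HasDerivWithinAt g (d t) (Set.Icc 0 T) t := by
    intro t ht
    rcases lt_or_ge (ENNReal.ofReal t) (F.τ y) with hlt | hle
    · exact hode t ht hlt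
    · -- stopped regime
      have hfrozen : ∀ s, t ≤ s → F.Φ s y = F.Φ t y := fun s hs => F.frozen y t s hle hs
      have hconst' : HasDerivWithinAt (fun s => ψ (F.Φ t y : ℝ) s) (d t) (Set.Icc 0 T) t := by
        have h := hchain t ht (fun _ => (F.Φ t y : ℝ)) 0 (fun _ => hmem t)
          (hasDerivWithinAt_const t _ _)
        rw [hdc t ht hle]
        simpa using h
      rcases lt_or_ge (F.τ y) (ENNReal.ofReal t) with hlt' | hle'
      · -- strictly after the stopping time: locally constant trajectory
        have hτtop : F.τ y ≠ ⊤ := hlt'.ne_top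
        set t₀ : ℝ := (F.τ y).toReal with ht₀_def
        have ht₀t : t₀ < t := (ENNReal.lt_ofReal_iff_toReal_lt hτtop).1 hlt'
        have hτt₀ : F.τ y ≤ ENNReal.ofReal t₀ := (ENNReal.ofReal_toReal hτtop).ge
        have heq : g =ᶠ[𝓝[Set.Icc 0 T] t] fun s => ψ (F.Φ t y : ℝ) s := by
          filter_upwards [nhdsWithin_le_nhds (Ici_mem_nhds ht₀t)] with s hs
          have h1 : F.Φ s y = F.Φ t₀ y := F.frozen y t₀ s hτt₀ hs
          have h2 : F.Φ t y = F.Φ t₀ y := F.frozen y t₀ t hτt₀ ht₀t.le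
          simp only [hg_def]
          rw [h1, h2]
        exact hconst'.congr_of_eventuallyEq heq rfl
      · -- exactly at the stopping time
        have heqτ : ENNReal.ofReal t = F.τ y := le_antisymm hle' hle
        -- right part
        have hright : HasDerivWithinAt g (d t) (Set.Icc t T) t := by
          refine (hconst'.mono (Set.Icc_subset_Icc ht.1 le_rfl)).congr (fun s hs => ?_) rfl
          simp only [hg_def]
          rw [hfrozen s hs.1]
        -- left part
        rcases eq_or_lt_of_le ht.1 with h0t | h0t
        · -- t = 0 : left set is a singleton
          have hleft : HasDerivWithinAt g (d t) (Set.Icc 0 t) t := by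
            rw [← h0t, Set.Icc_self]
            rw [hasDerivWithinAt_iff_tendsto_slope]
            simp
          have hu := hleft.union hright
          rwa [Set.Icc_union_Icc_eq_Icc ht.1 ht.2] at hu
        · have hAt : ∀ s ∈ Set.Ioo (0:ℝ) t, HasDerivAt g (d s) s := by
            intro s hs
            have hs' : s ∈ Set.Icc (0:ℝ) T := ⟨hs.1.le, (hs.2.trans_le ht.2).le⟩
            have hlts : ENNReal.ofReal s < F.τ y := by
              rw [← heqτ]
              exact (ENNReal.ofReal_lt_ofReal_iff h0t).2 hs.2
            exact (hode s hs' hlts).hasDerivAt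
              (Icc_mem_nhds hs.1 (hs.2.trans_le ht.2))
          have hIoomem : Set.Ioo 0 t ∈ 𝓝[<] t := Ioo_mem_nhdsLT_of_mem ⟨h0t, le_rfl⟩
          have hIoosub : Set.Ioo (0:ℝ) t ⊆ Set.Icc 0 T :=
            fun s hs => ⟨hs.1.le, (hs.2.trans_le ht.2).le⟩
          have hlim' : Tendsto (deriv g) (𝓝[<] t) (𝓝 (d t)) := by
            have h1 : Tendsto d (𝓝[<] t) (𝓝 (d t)) :=
              ((hdcont t ht).mono hIoosub).mono_left (nhdsWithin_le_of_mem hIoomem)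
            exact h1.congr' (by filter_upwards [hIoomem] with s hs using ((hAt s hs).deriv).symm)
          have hleft : HasDerivWithinAt g (d t) (Set.Iic t) t :=
            hasDerivWithinAt_Iic_of_tendsto_deriv
              (fun s hs => (hAt s hs).differentiableAt.differentiableWithinAt)
              ((hgcont t ht).mono hIoosub) hIoomem hlim'
          have hu := (hleft.mono (Set.Icc_subset_Iic_self (a := (0:ℝ)))).union hright
          rwa [Set.Icc_union_Icc_eq_Icc ht.1 ht.2] at hu
  refine ⟨fun t ht hlt => hode t ht hlt, fun t ht hle => ?_, ?_⟩
  · have h := hmain t ht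
    rwa [hdc t ht hle] at h
  · have h0 : g 0 = ψ (y : ℝ) 0 := by simp [hg_def, F.init y]
    have hTg : g T = ψ (F.Φ T y : ℝ) T := rfl
    rw [← h0, ← hTg]
    refine (intervalIntegral.integral_eq_sub_of_hasDeriv_right_of_le hT.le hgcont
      (fun x hx => ?_) ?_).symm
    · exact ((hmain x ⟨hx.1.le, hx.2.le⟩).hasDerivAt (Icc_mem_nhds hx.1 hx.2)).hasDerivWithinAt
    · exact (show ContinuousOn d (Set.uIcc 0 T) by
        rw [Set.uIcc_of_le hT.le]; exact hdcont).intervalIntegrable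

end
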